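/- For any complex n×n matrix A there exists a unitary matrix U such that rank(A − U) ≤ rank(A*A − I). -/

import Mathlib

set_option maxHeartbeats 1000000

open Matrix

/-- Theorem 6: near any almost unitary matrix there is a unitary matrix:
`rank (A - U) ≤ rank (A*A - 1)` for some unitary `U`. -/
theorem stmt_13 {n : ℕ} (A : Matrix (Fin n) (Fin n) ℂ) :
    ∃ U : Matrix (Fin n) (Fin n) ℂ, U ∈ Matrix.unitaryGroup (Fin n) ℂ ∧
      (A - U).rank ≤ (A.conjTranspose * A - 1).rank := by
  classical
  set B : Matrix (Fin n) (Fin n) ℂ := A.conjTranspose * A - 1 with hB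
  let a : EuclideanSpace ℂ (Fin n) →ₗ[ℂ] EuclideanSpace ℂ (Fin n) := Matrix.toEuclideanLin A
  let S : Submodule ℂ (EuclideanSpace ℂ (Fin n)) := LinearMap.ker (Matrix.toEuclideanLin B)
  -- on S, Aᴴ A acts as identity
  have key : ∀ x : S, LinearMap.adjoint a (a x) = (x : EuclideanSpace ℂ (Fin n)) := by
    intro x
    have hx : Matrix.toEuclideanLin B (x : EuclideanSpace ℂ (Fin n)) = 0 := x.2
    rw [hB, map_sub] at hx
    rw [LinearMap.sub_apply, sub_eq_zero] at hx
    have h1 : Matrix.toEuclideanLin (A.conjTranspose * A) (x : EuclideanSpace ℂ (Fin n)) = (x : EuclideanSpace ℂ (Fin n)) := by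
      have hone : Matrix.toEuclideanLin (1 : Matrix (Fin n) (Fin n) ℂ) (x : EuclideanSpace ℂ (Fin n)) = (x : EuclideanSpace ℂ (Fin n)) := by
        simp [Matrix.toEuclideanLin_apply]
      rw [hx, hone]
    have h2 : Matrix.toEuclideanLin (A.conjTranspose * A) (x : EuclideanSpace ℂ (Fin n)) =
        LinearMap.adjoint a (a (x : EuclideanSpace ℂ (Fin n))) := by
      rw [← Matrix.toEuclideanLin_conjTranspose_eq_adjoint]
      simp only [Matrix.toEuclideanLin_apply, a]
      congr 1
      simp [Matrix.mulVec_mulVec]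
    rw [← h2, h1]
  -- the restriction of a to S preserves inner products
  have inner_pres : ∀ x y : S, @inner ℂ _ _ (a x) (a y) = @inner ℂ _ _ (x : EuclideanSpace ℂ (Fin n)) (y : EuclideanSpace ℂ (Fin n)) := by
    intro x y
    rw [← LinearMap.adjoint_inner_right a, key y]
  -- build the isometry on S
  let L : S →ₗᵢ[ℂ] EuclideanSpace ℂ (Fin n) :=
    { toLinearMap := a.comp S.subtype,
      norm_map' := by
        intro x
        have hx : @inner ℂ _ _ (a x) (a x) = @inner ℂ _ _ (x : EuclideanSpace ℂ (Fin n)) (x : EuclideanSpace ℂ (Fin n)) :=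
          inner_pres x x
        have h1 : ‖a (x : EuclideanSpace ℂ (Fin n))‖ = ‖(x : EuclideanSpace ℂ (Fin n))‖ := by
          rw [@norm_eq_sqrt_re_inner ℂ, @norm_eq_sqrt_re_inner ℂ, hx]
        simpa using h1 }
  let Uiso : EuclideanSpace ℂ (Fin n) →ₗᵢ[ℂ] EuclideanSpace ℂ (Fin n) := L.extend
  let U : Matrix (Fin n) (Fin n) ℂ := Matrix.toEuclideanLin.symm Uiso.toLinearMap
  have hU : Matrix.toEuclideanLin U = Uiso.toLinearMap := Matrix.toEuclideanLin.apply_symm_apply _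
  refine ⟨U, ?_, ?_⟩
  · rw [Matrix.mem_unitaryGroup_iff']
    have : Matrix.toEuclideanLin (star U * U) = Matrix.toEuclideanLin (1 : Matrix (Fin n) (Fin n) ℂ) := by
      have hmul : Matrix.toEuclideanLin ((star U : Matrix (Fin n) (Fin n) ℂ) * U) =
          (Matrix.toEuclideanLin (star U)).comp (Matrix.toEuclideanLin U) := by
        apply LinearMap.ext; intro x
        simp [Matrix.toEuclideanLin_apply, Matrix.mulVec_mulVec]
      rw [hmul]
      have hstar : Matrix.toEuclideanLin (star U) = LinearMap.adjoint (Matrix.toEuclideanLin U) :=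
        Matrix.toEuclideanLin_conjTranspose_eq_adjoint U
      rw [hstar, hU]
      apply LinearMap.ext; intro x
      apply ext_inner_left ℂ; intro y
      rw [LinearMap.comp_apply, LinearMap.adjoint_inner_right]
      simp [Uiso.inner_map_map, Matrix.toEuclideanLin_apply]
    exact Matrix.toEuclideanLin.injective this
  · -- rank bound via kernels
    have hker : ∀ x : Fin n → ℂ, B *ᵥ x = 0 → (A - U) *ᵥ x = 0 := by
      intro x hx
      set x' : EuclideanSpace ℂ (Fin n) := (WithLp.equiv 2 (Fin n → ℂ)).symm x with hx'
      have hxS : x' ∈ S := by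
        show Matrix.toEuclideanLin B x' = 0
        rw [Matrix.toEuclideanLin_apply]
        simp [hx', hx]
      have hUx : Matrix.toEuclideanLin U x' = a x' := by
        rw [hU]
        have := L.extend_apply ⟨x', hxS⟩
        simpa [L, LinearMap.isometryOfInner] using this
      have : U *ᵥ x = A *ᵥ x := by
        have h1 : (WithLp.equiv 2 (Fin n → ℂ)).symm (U *ᵥ x) =
            (WithLp.equiv 2 (Fin n → ℂ)).symm (A *ᵥ x) := by
          rw [WithLp.equiv_symm_apply, ← Matrix.toEuclideanLin_apply_piLp_toLp,
              ← Matrix.toEuclideanLin_apply_piLp_toLp]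
          exact hUx
        exact (WithLp.equiv 2 (Fin n → ℂ)).symm.injective h1
      rw [Matrix.sub_mulVec, this, sub_self]
    have hkle : LinearMap.ker B.mulVecLin ≤ LinearMap.ker (A - U).mulVecLin := by
      intro x hx
      exact hker x hx
    have h1 := LinearMap.finrank_range_add_finrank_ker (A - U).mulVecLin
    have h2 := LinearMap.finrank_range_add_finrank_ker B.mulVecLin
    have h3 : Module.finrank ℂ (LinearMap.ker B.mulVecLin) ≤
        Module.finrank ℂ (LinearMap.ker (A - U).mulVecLin) :=
      Submodule.finrank_mono hkle
    show (A - U).rank ≤ B.rank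
    unfold Matrix.rank
    omega
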